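/- arXiv:2507.21345 — 4 statements merged into one kernel-verified Lean document; each statement's English description precedes it below -/
import Mathlib

section
/- Let D be an n×n real symmetric matrix with zero diagonal and positive off-diagonal entries, Tr the diagonal matrix of row sums of D, and let A be any n×n Hermitian matrix with |A_ij| = D_ij for all i,j (so A has zero diagonal). Set L = Tr − A. Then ρ(L) ≤ ρ(Tr + D). -/
open Matrix

noncomputable def specRad {n : ℕ} (M : Matrix (Fin n) (Fin n) ℂ) : ℝ :=
  sSup ((fun μ => ‖μ‖) '' spectrum ℂ M)

set_option maxHeartbeats 1000000 in
open scoped Matrix.Norms.L2Operator in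
/-- `ρ(DL(Φ)) ≤ ρ(DQ(G))`: the gain distance Laplacian spectral radius is at most
the spectral radius of the distance signless Laplacian. -/
theorem stmt_7 {n : ℕ} (hn : 2 ≤ n) (D : Matrix (Fin n) (Fin n) ℝ)
    (hsymm : D.IsSymm) (hdiag : ∀ i, D i i = 0)
    (hpos : ∀ i j, i ≠ j → 0 < D i j)
    (A : Matrix (Fin n) (Fin n) ℂ) (hA : A.IsHermitian)
    (habs : ∀ i j, ‖A i j‖ = D i j) :
    specRad (Matrix.diagonal (fun i => ((∑ j, D i j : ℝ) : ℂ)) - A) ≤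
      specRad ((Matrix.diagonal (fun i => ∑ j, D i j) + D).map Complex.ofReal) := by
  haveI : Nonempty (Fin n) := ⟨⟨0, by omega⟩⟩
  set L : Matrix (Fin n) (Fin n) ℂ :=
    Matrix.diagonal (fun i => ((∑ j, D i j : ℝ) : ℂ)) - A with hL
  set Q : Matrix (Fin n) (Fin n) ℝ := Matrix.diagonal (fun i => ∑ j, D i j) + D with hQ
  set Qc : Matrix (Fin n) (Fin n) ℂ := Q.map Complex.ofReal with hQc
  have hDnn : ∀ i j, 0 ≤ D i j := fun i j => by
    rcases eq_or_ne i j with rfl | h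
    · simp [hdiag i]
    · exact (hpos i j h).le
  have hrow : ∀ i, 0 ≤ ∑ j, D i j := fun i => Finset.sum_nonneg fun j _ => hDnn i j
  have hQnn : ∀ i j, 0 ≤ Q i j := by
    intro i j
    rcases eq_or_ne i j with rfl | h
    · simpa [hQ, Matrix.add_apply] using add_nonneg (hrow i) (hDnn i i)
    · simpa [hQ, Matrix.add_apply, Matrix.diagonal_apply_ne _ h] using hDnn i j
  have hAdiag : ∀ i, A i i = 0 := fun i => norm_eq_zero.mp (by rw [habs i i, hdiag i])
  have hentry : ∀ i j, ‖L i j‖ = Q i j := by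
    intro i j
    rcases eq_or_ne i j with rfl | h
    · simp only [hL, hQ, Matrix.sub_apply, Matrix.diagonal_apply_eq, hAdiag i, sub_zero,
        Matrix.add_apply, hdiag i, add_zero, Complex.norm_real]
      exact abs_of_nonneg (hrow i)
    · simp [hL, hQ, Matrix.sub_apply, Matrix.diagonal_apply_ne _ h, Matrix.add_apply,
        habs i j]
  -- step 1 : specRad L ≤ ‖L‖
  have h1 : specRad L ≤ ‖L‖ := by
    apply Real.sSup_le _ (norm_nonneg _)
    rintro _ ⟨μ, hμ, rfl⟩
    exact spectrum.norm_le_norm_of_mem hμ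
  -- step 2 : ‖L‖ ≤ ‖Qc‖
  have h2 : ‖L‖ ≤ ‖Qc‖ := by
    rw [Matrix.l2_opNorm_def]
    refine ContinuousLinearMap.opNorm_le_bound _ (norm_nonneg _) fun x => ?_
    set y : EuclideanSpace ℂ (Fin n) :=
      (WithLp.equiv 2 (Fin n → ℂ)).symm (fun j => (‖x j‖ : ℂ)) with hy
    have hyx : ‖y‖ = ‖x‖ := by
      rw [EuclideanSpace.norm_eq, EuclideanSpace.norm_eq]
      congr 1
      refine Finset.sum_congr rfl fun j _ => ?_
      simp [hy]
    have hmain : ‖((Matrix.toEuclideanLin.trans LinearMap.toContinuousLinearMap) L) x‖ ≤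
        ‖(EuclideanSpace.equiv (Fin n) ℂ).symm (Qc *ᵥ (WithLp.equiv 2 (Fin n → ℂ)) y)‖ := by
      rw [EuclideanSpace.norm_eq, EuclideanSpace.norm_eq]
      apply Real.sqrt_le_sqrt
      refine Finset.sum_le_sum fun i _ => ?_
      have e1 : (((Matrix.toEuclideanLin.trans LinearMap.toContinuousLinearMap) L) x) i =
          (L *ᵥ (WithLp.equiv 2 (Fin n → ℂ)) x) i := rfl
      have e2 : ((EuclideanSpace.equiv (Fin n) ℂ).symm
          (Qc *ᵥ (WithLp.equiv 2 (Fin n → ℂ)) y)) i =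
          (Qc *ᵥ (fun j => (‖x j‖ : ℂ))) i := rfl
      rw [e1, e2]
      have hQv : (Qc *ᵥ (fun j => (‖x j‖ : ℂ))) i = ((∑ j, Q i j * ‖x j‖ : ℝ) : ℂ) := by
        simp only [Matrix.mulVec, dotProduct, hQc, Matrix.map_apply]
        push_cast
        rfl
      have hQvnn : 0 ≤ ∑ j, Q i j * ‖x j‖ :=
        Finset.sum_nonneg fun j _ => mul_nonneg (hQnn i j) (norm_nonneg _)
      have hbound : ‖(L *ᵥ (WithLp.equiv 2 (Fin n → ℂ)) x) i‖ ≤ ∑ j, Q i j * ‖x j‖ := by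
        simp only [Matrix.mulVec, dotProduct]
        refine (norm_sum_le _ _).trans ?_
        refine Finset.sum_le_sum fun j _ => ?_
        rw [norm_mul, hentry i j]
        exact le_rfl
      have hnormQ : ‖(Qc *ᵥ (fun j => (‖x j‖ : ℂ))) i‖ = ∑ j, Q i j * ‖x j‖ := by
        rw [hQv, Complex.norm_real]
        exact abs_of_nonneg hQvnn
      rw [hnormQ]
      exact pow_le_pow_left₀ (norm_nonneg _) hbound 2
    calc ‖((Matrix.toEuclideanLin.trans LinearMap.toContinuousLinearMap) L) x‖
        ≤ ‖(EuclideanSpace.equiv (Fin n) ℂ).symm (Qc *ᵥ (WithLp.equiv 2 (Fin n → ℂ)) y)‖ :=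
          hmain
      _ ≤ ‖Qc‖ * ‖y‖ := Qc.l2_opNorm_mulVec y
      _ = ‖Qc‖ * ‖x‖ := by rw [hyx]
  -- step 3 : ‖Qc‖ ≤ specRad Qc
  have hQsymm : ∀ i j, Q j i = Q i j := by
    intro i j
    rcases eq_or_ne i j with rfl | h
    · rfl
    · simp [hQ, Matrix.add_apply, Matrix.diagonal_apply_ne _ h,
        Matrix.diagonal_apply_ne _ (Ne.symm h), hsymm.apply i j]
  have hQcSA : IsSelfAdjoint Qc := by
    show Qcᴴ = Qc
    ext i j
    rw [Matrix.conjTranspose_apply, hQc, Matrix.map_apply, Matrix.map_apply,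
      Complex.star_def, Complex.conj_ofReal, hQsymm i j]
  have hnn : 0 ≤ specRad Qc :=
    Real.sSup_nonneg (by rintro _ ⟨μ, _, rfl⟩; exact norm_nonneg _)
  have h3 : ‖Qc‖ ≤ specRad Qc := by
    set T := Matrix.toEuclideanCLM (𝕜 := ℂ) (n := Fin n) Qc with hT
    have hspec : spectrum ℂ T = spectrum ℂ Qc :=
      AlgEquiv.spectrum_eq (Matrix.toEuclideanCLM (𝕜 := ℂ) (n := Fin n)) Qc
    have hTsa : IsSelfAdjoint T := by
      rw [hT]
      exact hQcSA.map (Matrix.toEuclideanCLM (𝕜 := ℂ) (n := Fin n))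
    have hbdd : BddAbove ((fun μ => ‖μ‖) '' spectrum ℂ Qc) := by
      rw [← hspec]
      exact ((spectrum.isCompact T).image continuous_norm).bddAbove
    have hle : spectralRadius ℂ T ≤ ENNReal.ofReal (specRad Qc) := by
      refine iSup₂_le fun μ hμ => ?_
      rw [hspec] at hμ
      have hμle : ‖μ‖ ≤ specRad Qc := le_csSup hbdd ⟨μ, hμ, rfl⟩
      refine (ofReal_norm μ).symm.le.trans ?_
      exact ENNReal.ofReal_le_ofReal hμle
    rw [hTsa.spectralRadius_eq_nnnorm] at hle
    have := ENNReal.toReal_mono (by simp) hle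
    rw [ENNReal.toReal_ofReal hnn] at this
    simpa [Matrix.cstar_norm_def, hT] using this
  calc specRad L ≤ ‖L‖ := h1
    _ ≤ ‖Qc‖ := h2
    _ ≤ specRad Qc := h3
end

section
/- Let L be an n×n Hermitian positive semidefinite matrix (n ≥ 2) with diagonal entries C(1),...,C(n) and suppose the off-diagonal entries satisfy |L_ij| = d_ij where d_ij ≥ 0 and C(i) = Σ_j d_ij for each i. Then ρ(L) ≥ C(k) + (Σ_j d_kj²)/C(k) for any index k with C(k) > 0. -/
open Matrix
open scoped ComplexOrder

/-- Cholesky step of the Wiener-index lower bound: for a PSD Hermitian `L` with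
`L_ii = Σ_j d_ij` and `|L_ij| = d_ij` off the diagonal,
`ρ(L) ≥ C(k) + (Σ_j d_kj²)/C(k)` whenever `C(k) > 0`. -/
theorem stmt_12 {n : ℕ} (hn : 2 ≤ n)
    (L : Matrix (Fin n) (Fin n) ℂ) (hL : L.PosSemidef)
    (d : Fin n → Fin n → ℝ) (hd0 : ∀ i, d i i = 0)
    (habs : ∀ i j, i ≠ j → ‖L i j‖ = d i j)
    (hdiag : ∀ i, L i i = ((∑ j, d i j : ℝ) : ℂ))
    (k : Fin n) (hk : 0 < ∑ j, d k j) :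
    (∑ j, d k j) + (∑ j, (d k j) ^ 2) / (∑ j, d k j) ≤ specRad L := by
  classical
  have hH := hL.1
  set U : Matrix (Fin n) (Fin n) ℂ := (hH.eigenvectorUnitary : Matrix (Fin n) (Fin n) ℂ) with hUdef
  set μ : Fin n → ℝ := hH.eigenvalues with hμdef
  set w : Fin n → ℝ := fun i => ‖U k i‖ ^ 2 with hwdef
  have hw : ∀ i, 0 ≤ w i := fun i => sq_nonneg _
  have hμ0 : ∀ i, 0 ≤ μ i := fun i => hL.eigenvalues_nonneg i
  set ρ : ℝ := specRad L with hρdef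
  have hμρ : ∀ i, μ i ≤ ρ := by
    intro i
    have h1 : (μ i : ℂ) ∈ spectrum ℂ L :=
      spectrum.algebraMap_mem ℂ (hH.eigenvalues_mem_spectrum_real i)
    have h2 : ‖(μ i : ℂ)‖ ∈ (fun z => ‖z‖) '' spectrum ℂ L := ⟨_, h1, rfl⟩
    have hb : BddAbove ((fun z => ‖z‖) '' spectrum ℂ L) :=
      ((L.finite_spectrum).image _).bddAbove
    have := le_csSup hb h2
    calc μ i ≤ |μ i| := le_abs_self _
      _ = ‖(μ i : ℂ)‖ := by rw [Complex.norm_real, Real.norm_eq_abs]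
      _ ≤ ρ := this
  -- key entry formula
  have key : ∀ f : Fin n → ℝ,
      (U * diagonal (fun i => (f i : ℂ)) * star U) k k
        = ((∑ i, f i * ‖U k i‖ ^ 2 : ℝ) : ℂ) := by
    intro f
    rw [mul_apply]
    push_cast
    refine Finset.sum_congr rfl fun j _ => ?_
    rw [mul_diagonal, star_apply]
    have : U k j * star (U k j) = ((‖U k j‖ ^ 2 : ℝ) : ℂ) := by
      rw [RCLike.star_def, Complex.mul_conj]
      norm_cast
      exact Complex.normSq_eq_norm_sq _
    calc U k j * (f j : ℂ) * star (U k j)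
        = (f j : ℂ) * (U k j * star (U k j)) := by ring
      _ = (f j : ℂ) * ((‖U k j‖ ^ 2 : ℝ) : ℂ) := by rw [this]
      _ = (f j : ℂ) * (‖U k j‖ : ℂ) ^ 2 := by push_cast; ring
  have hspec : L = U * diagonal (fun i => (μ i : ℂ)) * star U := by
    have := hH.spectral_theorem
    rw [Unitary.conjStarAlgAut_apply] at this
    exact this
  have hUU : star U * U = 1 := (Matrix.mem_unitaryGroup_iff'.mp hH.eigenvectorUnitary.2)
  -- diagonal entry
  have hLkk : L k k = ((∑ i, μ i * ‖U k i‖ ^ 2 : ℝ) : ℂ) := by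
    rw [hspec]; exact key μ
  have hC : (∑ j, d k j) = ∑ i, μ i * w i := by
    have := (hdiag k).symm.trans hLkk
    exact_mod_cast this
  -- (L*L) k k two ways
  have hL2 : (L * L) k k = ((∑ i, μ i ^ 2 * ‖U k i‖ ^ 2 : ℝ) : ℂ) := by
    have : L * L = U * diagonal (fun i => ((μ i ^ 2 : ℝ) : ℂ)) * star U := by
      rw [hspec]
      rw [show U * diagonal (fun i => (μ i : ℂ)) * star U *
          (U * diagonal (fun i => (μ i : ℂ)) * star U)
          = U * diagonal (fun i => (μ i : ℂ)) * (star U * U) *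
            diagonal (fun i => (μ i : ℂ)) * star U by
        simp only [mul_assoc]]
      rw [hUU, mul_one, mul_assoc _ (diagonal _) (diagonal _), diagonal_mul_diagonal]
      push_cast
      ring_nf
    rw [this]; exact key _
  have hL2' : (L * L) k k = ((∑ j, ‖L k j‖ ^ 2 : ℝ) : ℂ) := by
    rw [mul_apply]
    push_cast
    refine Finset.sum_congr rfl fun j _ => ?_
    have hjk : L j k = star (L k j) := by
      conv_lhs => rw [← hH]
      rfl
    rw [hjk, RCLike.star_def, Complex.mul_conj]
    norm_cast
    exact Complex.normSq_eq_norm_sq _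
  have hnorm : (∑ j, ‖L k j‖ ^ 2 : ℝ) = (∑ j, d k j) ^ 2 + ∑ j, d k j ^ 2 := by
    rw [← Finset.sum_erase_add _ _ (Finset.mem_univ k)]
    have h1 : ∑ j ∈ Finset.univ.erase k, ‖L k j‖ ^ 2
        = ∑ j ∈ Finset.univ.erase k, d k j ^ 2 := by
      refine Finset.sum_congr rfl fun j hj => ?_
      rw [habs k j (Ne.symm (Finset.ne_of_mem_erase hj))]
    have h2 : ∑ j ∈ Finset.univ.erase k, d k j ^ 2 = ∑ j, d k j ^ 2 := by
      rw [← Finset.sum_erase_add _ _ (Finset.mem_univ k), hd0, zero_pow two_ne_zero, add_zero]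
    have h3 : ‖L k k‖ ^ 2 = (∑ j, d k j) ^ 2 := by
      rw [hdiag k, Complex.norm_real, Real.norm_eq_abs, sq_abs]
    rw [h1, h2, h3]; ring
  have hsum : (∑ j, d k j) ^ 2 + ∑ j, d k j ^ 2 = ∑ i, μ i ^ 2 * w i := by
    have := hL2.symm.trans hL2'
    have h := Complex.ofReal_injective this.symm
    rw [← hnorm, h]
  -- the inequality
  have hle : ∑ i, μ i ^ 2 * w i ≤ ρ * ∑ i, μ i * w i := by
    rw [Finset.mul_sum]
    refine Finset.sum_le_sum fun i _ => ?_
    have h := mul_le_mul_of_nonneg_right (hμρ i) (mul_nonneg (hμ0 i) (hw i))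
    calc μ i ^ 2 * w i = μ i * (μ i * w i) := by ring
      _ ≤ ρ * (μ i * w i) := h
  have hmain : (∑ j, d k j) ^ 2 + ∑ j, d k j ^ 2 ≤ ρ * ∑ j, d k j := by
    rw [hsum, hC]; exact hle
  rw [← sub_nonneg]
  have : ρ - ((∑ j, d k j) + (∑ j, (d k j) ^ 2) / (∑ j, d k j))
      = (ρ * (∑ j, d k j) - ((∑ j, d k j) ^ 2 + ∑ j, d k j ^ 2)) / (∑ j, d k j) := by
    field_simp
  rw [this]
  exact div_nonneg (by linarith) hk.le
end

section
/- Let L be an n×n Hermitian positive semidefinite matrix (n ≥ 2) with diagonal entries C(i) = Σ_j d_ij and |L_ij| = d_ij for i ≠ j, where the d_ij ≥ 0 are symmetric with zero diagonal and not all zero. Then ρ(L) ≥ 2W/(n−1), where W = Σ_{i<j} d_ij. -/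
open Matrix
open scoped ComplexOrder

/-- Wiener-index lower bound: `ρ(L) ≥ 2W/(n−1)` for a gain distance Laplacian. -/
theorem stmt_13 {n : ℕ} (hn : 2 ≤ n)
    (L : Matrix (Fin n) (Fin n) ℂ) (hL : L.PosSemidef)
    (d : Fin n → Fin n → ℝ) (hd0 : ∀ i, d i i = 0)
    (hdsymm : ∀ i j, d i j = d j i) (hdnn : ∀ i j, 0 ≤ d i j)
    (hdne : d ≠ fun _ _ => 0)
    (habs : ∀ i j, i ≠ j → ‖L i j‖ = d i j)
    (hdiag : ∀ i, L i i = ((∑ j, d i j : ℝ) : ℂ))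
    (W : ℝ)
    (hW : W = ∑ i, ∑ j ∈ Finset.univ.filter (fun j => i < j), d i j) :
    2 * W / ((n : ℝ) - 1) ≤ specRad L := by
  classical
  have hH : L.IsHermitian := hL.1
  set ev : Fin n → ℝ := hH.eigenvalues with hev
  have evnn : ∀ i, 0 ≤ ev i := hL.eigenvalues_nonneg
  set C : Fin n → ℝ := fun i => ∑ j, d i j with hC
  set T : ℝ := ∑ i, C i with hT
  have hCnn : ∀ i, 0 ≤ C i := fun i => Finset.sum_nonneg fun j _ => hdnn i j
  set N : ℝ := (n : ℝ) with hN
  have hN2 : (2 : ℝ) ≤ N := by rw [hN]; exact_mod_cast hn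
  -- spectral theorem facts
  set U : Matrix (Fin n) (Fin n) ℂ := (hH.eigenvectorUnitary : Matrix (Fin n) (Fin n) ℂ) with hU
  set D : Matrix (Fin n) (Fin n) ℂ := diagonal (RCLike.ofReal ∘ ev) with hD
  have hspec : L = U * D * star U := hH.spectral_theorem
  have hUU : star U * U = 1 := Matrix.UnitaryGroup.star_mul_self _
  have htr1 : L.trace = ∑ i, (ev i : ℂ) := by
    rw [hspec, trace_mul_cycle, hUU, Matrix.one_mul, hD, trace_diagonal]
    rfl
  have hL2 : L * L = U * (D * D) * star U := by
    rw [hspec]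
    simp only [Matrix.mul_assoc]
    rw [← Matrix.mul_assoc (star U) U, hUU, Matrix.one_mul]
  have htr2 : (L * L).trace = ∑ i, ((ev i : ℂ)) ^ 2 := by
    rw [hL2, trace_mul_cycle, hUU, Matrix.one_mul, hD, diagonal_mul_diagonal, trace_diagonal]
    simp [sq]
  -- entrywise trace computations
  have htr1' : L.trace = (T : ℂ) := by
    rw [Matrix.trace]
    simp only [Matrix.diag_apply, hdiag]
    push_cast [hT, hC]
    rfl
  have hevT : ∑ i, ev i = T := by
    have h := htr1.symm.trans htr1'
    exact_mod_cast h
  -- T = 2 W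
  have h2W : T = 2 * W := by
    have hsplit : ∀ i j : Fin n, d i j =
        (if i < j then d i j else 0) + (if j < i then d i j else 0) := by
      intro i j
      rcases lt_trichotomy i j with h | h | h
      · simp [h, h.asymm]
      · subst h; simp [hd0]
      · simp [h, h.asymm]
    have hB : (∑ i, ∑ j, if j < i then d i j else 0)
        = ∑ i, ∑ j, if i < j then d i j else 0 := by
      rw [Finset.sum_comm]
      refine Finset.sum_congr rfl fun a _ => Finset.sum_congr rfl fun b _ => ?_
      by_cases h : a < b <;> simp [h, hdsymm]
    have hWalt : W = ∑ i, ∑ j, if i < j then d i j else 0 := by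
      rw [hW]
      exact Finset.sum_congr rfl fun i _ => Finset.sum_filter _ _
    calc T = ∑ i, ∑ j, d i j := by rw [hT]
      _ = ∑ i, ∑ j, ((if i < j then d i j else 0) + (if j < i then d i j else 0)) := by
          refine Finset.sum_congr rfl fun i _ => Finset.sum_congr rfl fun j _ => hsplit i j
      _ = (∑ i, ∑ j, if i < j then d i j else 0) + ∑ i, ∑ j, if j < i then d i j else 0 := by
          simp [Finset.sum_add_distrib]
      _ = 2 * W := by rw [hB, ← hWalt]; ring
  -- positivity of T
  have hTpos : 0 < T := by
    have : ∃ i j, d i j ≠ 0 := by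
      by_contra h
      push_neg at h
      exact hdne (funext fun i => funext fun j => h i j)
    obtain ⟨i0, j0, hij⟩ := this
    have h1 : 0 < d i0 j0 := lt_of_le_of_ne (hdnn i0 j0) (Ne.symm hij)
    have h2 : d i0 j0 ≤ C i0 :=
      Finset.single_le_sum (fun j _ => hdnn i0 j) (Finset.mem_univ j0)
    have h3 : C i0 ≤ T :=
      Finset.single_le_sum (fun i _ => hCnn i) (Finset.mem_univ i0)
    linarith
  -- second trace identity, entrywise
  set S1 : ℝ := ∑ i, (C i) ^ 2 with hS1
  set S2 : ℝ := ∑ i, ∑ j, (d i j) ^ 2 with hS2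
  have hterm : ∀ i j, L i j * L j i = ((‖L i j‖ ^ 2 : ℝ) : ℂ) := by
    intro i j
    have hji : L j i = star (L i j) := by
      conv_lhs => rw [← hH]
      rw [Matrix.conjTranspose_apply]
    rw [hji, show (star (L i j)) = (starRingEnd ℂ) (L i j) from rfl,
      RCLike.mul_conj]
    norm_cast
  have hnorm : ∀ i j, ‖L i j‖ ^ 2 = (if i = j then (C i) ^ 2 else 0) + (d i j) ^ 2 := by
    intro i j
    by_cases h : i = j
    · subst h
      rw [hdiag i, Complex.norm_real, Real.norm_eq_abs,
        abs_of_nonneg (hCnn i : (0:ℝ) ≤ ∑ j, d i j)]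
      simp [hd0, hC]
    · simp [h, habs i j h]
  have hQ : (∑ i, ∑ j, ‖L i j‖ ^ 2) = S1 + S2 := by
    rw [hS1, hS2, ← Finset.sum_add_distrib]
    refine Finset.sum_congr rfl fun i _ => ?_
    calc (∑ j, ‖L i j‖ ^ 2)
        = ∑ j, ((if i = j then (C i) ^ 2 else 0) + (d i j) ^ 2) :=
          Finset.sum_congr rfl fun j _ => hnorm i j
      _ = (C i) ^ 2 + ∑ j, (d i j) ^ 2 := by
          rw [Finset.sum_add_distrib, Finset.sum_ite_eq]
          simp
  have htr2' : (L * L).trace = ((S1 + S2 : ℝ) : ℂ) := by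
    rw [Matrix.trace]
    calc ∑ i, (L * L).diag i
        = ∑ i, ∑ j, L i j * L j i := by
          refine Finset.sum_congr rfl fun i _ => ?_
          simp [Matrix.diag_apply, Matrix.mul_apply]
      _ = ∑ i, ∑ j, ((‖L i j‖ ^ 2 : ℝ) : ℂ) := by
          refine Finset.sum_congr rfl fun i _ => Finset.sum_congr rfl fun j _ => hterm i j
      _ = ((∑ i, ∑ j, ‖L i j‖ ^ 2 : ℝ) : ℂ) := by push_cast; rfl
      _ = _ := by rw [hQ]
  have hev2 : ∑ i, (ev i) ^ 2 = S1 + S2 := by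
    have h := htr2.symm.trans htr2'
    exact_mod_cast h
  -- Cauchy-Schwarz bounds
  have cs1 : T ^ 2 ≤ N * S1 := by
    have := sq_sum_le_card_mul_sum_sq (s := (Finset.univ : Finset (Fin n))) (f := C)
    simpa [hT, hS1, hN] using this
  have cs2 : T ^ 2 ≤ N * (N - 1) * S2 := by
    -- sum over off-diagonal pairs
    have hod : (Finset.univ.offDiag : Finset (Fin n × Fin n)) =
        (Finset.univ ×ˢ Finset.univ).filter (fun p => p.1 ≠ p.2) := by
      ext p; simp [Finset.mem_offDiag]
    have hsum : ∑ p ∈ Finset.univ.offDiag, d p.1 p.2 = T := by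
      rw [hod, Finset.sum_filter, Finset.sum_product, hT]
      refine Finset.sum_congr rfl fun i _ => Finset.sum_congr rfl fun j _ => ?_
      by_cases h : i = j
      · subst h; simp [hd0]
      · simp [h]
    have hsumsq : ∑ p ∈ Finset.univ.offDiag, (d p.1 p.2) ^ 2 = S2 := by
      rw [hod, Finset.sum_filter, Finset.sum_product, hS2]
      refine Finset.sum_congr rfl fun i _ => Finset.sum_congr rfl fun j _ => ?_
      by_cases h : i = j
      · subst h; simp [hd0]
      · simp [h]
    have hcard : ((Finset.univ.offDiag : Finset (Fin n × Fin n)).card : ℝ) = N * (N - 1) := by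
      rw [Finset.offDiag_card]
      have h1 : (Finset.univ : Finset (Fin n)).card = n := by simp
      rw [h1]
      have h2 : n ≤ n * n := Nat.le_mul_of_pos_left n (by omega)
      push_cast [Nat.cast_sub h2]
      ring
    have := sq_sum_le_card_mul_sum_sq
      (s := (Finset.univ.offDiag : Finset (Fin n × Fin n))) (f := fun p => d p.1 p.2)
    rw [hsum, hsumsq, hcard] at this
    exact this
  -- max eigenvalue
  obtain ⟨k, -, hk⟩ := Finset.exists_max_image (Finset.univ : Finset (Fin n)) ev
    ⟨⟨0, by omega⟩, Finset.mem_univ _⟩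
  have hmax : S1 + S2 ≤ ev k * T := by
    rw [← hev2, ← hevT, Finset.mul_sum]
    refine Finset.sum_le_sum fun i _ => ?_
    rw [sq]
    exact mul_le_mul_of_nonneg_right (hk i (Finset.mem_univ i)) (evnn i)
  -- combine
  have hNpos : (0 : ℝ) < N := by linarith
  have hN1 : (0 : ℝ) < N - 1 := by linarith
  have key : T ≤ ev k * (N - 1) := by
    have step : N * T * T ≤ N * T * (ev k * (N - 1)) := by
      calc N * T * T = (N - 1) * T ^ 2 + T ^ 2 := by ring
        _ ≤ (N - 1) * (N * S1) + N * (N - 1) * S2 :=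
            add_le_add (mul_le_mul_of_nonneg_left cs1 hN1.le) cs2
        _ = N * (N - 1) * (S1 + S2) := by ring
        _ ≤ N * (N - 1) * (ev k * T) :=
            mul_le_mul_of_nonneg_left hmax (by positivity)
        _ = N * T * (ev k * (N - 1)) := by ring
    exact le_of_mul_le_mul_left step (mul_pos hNpos hTpos)
  -- spectral radius lower bound
  have hmem : ((ev k : ℝ) : ℂ) ∈ spectrum ℂ L := by
    have h := hH.eigenvalues_mem_spectrum_real k
    rw [← spectrum.algebraMap_mem_iff ℂ] at h
    simpa using h
  have hb : BddAbove ((fun μ => ‖μ‖) '' spectrum ℂ L) :=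
    ((L.finite_spectrum).image _).bddAbove
  have hle : ev k ≤ specRad L := by
    have hnorm : ‖((ev k : ℝ) : ℂ)‖ = ev k := by
      rw [Complex.norm_real, Real.norm_eq_abs, abs_of_nonneg (evnn k)]
    have h2 := le_csSup hb (Set.mem_image_of_mem (fun μ => ‖μ‖) hmem)
    simp only [specRad]
    simpa [abs_of_nonneg (evnn k)] using h2
  have : 2 * W / (N - 1) ≤ ev k := by
    rw [div_le_iff₀ hN1, ← h2W]
    linarith
  calc 2 * W / ((n : ℝ) - 1) ≤ ev k := this
    _ ≤ specRad L := hle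
end

section
/- Let N be an n×n Hermitian matrix and M an n×n nonnegative real matrix with M ≥ |N| entrywise, M irreducible and symmetric. If N is positive semidefinite and ρ(N) = ρ(M), then N and M are unitarily similar via a diagonal unitary matrix, and in particular N and M have the same spectrum. -/
open Matrix
open scoped ComplexOrder

/-- Entrywise irreducibility of a real matrix. -/
def MatIrred {n : ℕ} (M : Matrix (Fin n) (Fin n) ℝ) : Prop :=
  ∀ S : Set (Fin n), S.Nonempty → Sᶜ.Nonempty → ∃ i ∈ S, ∃ j ∈ Sᶜ, M i j ≠ 0

lemma herm_spectrum {n : ℕ} {A : Matrix (Fin n) (Fin n) ℂ} (hA : A.IsHermitian) :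
    spectrum ℂ A = Set.range (fun i => (hA.eigenvalues i : ℂ)) := by
  have hV : (hA.eigenvectorUnitary : Matrix (Fin n) (Fin n) ℂ) *
      star (hA.eigenvectorUnitary : Matrix (Fin n) (Fin n) ℂ) = 1 :=
    Matrix.mem_unitaryGroup_iff.mp hA.eigenvectorUnitary.2
  have hV' : star (hA.eigenvectorUnitary : Matrix (Fin n) (Fin n) ℂ) *
      (hA.eigenvectorUnitary : Matrix (Fin n) (Fin n) ℂ) = 1 :=
    Matrix.mem_unitaryGroup_iff'.mp hA.eigenvectorUnitary.2
  set U : (Matrix (Fin n) (Fin n) ℂ)ˣ := ⟨_, _, hV, hV'⟩ with hU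
  have h1 : A = (U : Matrix (Fin n) (Fin n) ℂ) * Matrix.diagonal (RCLike.ofReal ∘ hA.eigenvalues)
      * ((U⁻¹ : (Matrix (Fin n) (Fin n) ℂ)ˣ) : Matrix (Fin n) (Fin n) ℂ) := hA.spectral_theorem
  have h2 := spectrum.units_conjugate (R := ℂ)
    (a := Matrix.diagonal (RCLike.ofReal ∘ hA.eigenvalues)) (u := U)
  rw [← h1] at h2
  rw [h2, spectrum_diagonal]
  ext x
  simp [Function.comp]

lemma specRad_herm {n : ℕ} (hn : 0 < n) {A : Matrix (Fin n) (Fin n) ℂ} (hA : A.IsHermitian) :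
    (∃ i, |hA.eigenvalues i| = specRad A) ∧ ∀ i, |hA.eigenvalues i| ≤ specRad A := by
  have : Nonempty (Fin n) := ⟨⟨0, hn⟩⟩
  have h : ((fun μ => ‖μ‖) '' spectrum ℂ A) = Set.range (fun i => |hA.eigenvalues i|) := by
    rw [herm_spectrum hA, ← Set.range_comp]
    ext r
    simp [Function.comp, Complex.norm_real, Real.norm_eq_abs]
  constructor
  · have := (Set.range_nonempty (fun i => |hA.eigenvalues i|)).csSup_mem
      (Set.finite_range _)
    rw [specRad, h]
    exact this.imp fun i hi => hi
  · intro i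
    rw [specRad, h]
    exact le_csSup (Set.finite_range _).bddAbove ⟨i, rfl⟩

lemma dot_self_eq {n : ℕ} (v : Fin n → ℂ) :
    star v ⬝ᵥ v = ((∑ i, ‖v i‖^2 : ℝ) : ℂ) := by
  push_cast
  simp [dotProduct, RCLike.conj_mul]

lemma herm_quad {n : ℕ} {A : Matrix (Fin n) (Fin n) ℂ} (hA : A.IsHermitian) (x : Fin n → ℂ) :
    ∃ w : Fin n → ℂ,
      star x ⬝ᵥ A *ᵥ x = ∑ i, (hA.eigenvalues i : ℂ) * ((‖w i‖^2 : ℝ) : ℂ) ∧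
      (∑ i, ‖w i‖^2) = ∑ i, ‖x i‖^2 ∧
      ∀ ρ : ℝ, (∀ i, hA.eigenvalues i ≠ ρ → w i = 0) → A *ᵥ x = (ρ : ℂ) • x := by
  set V : Matrix (Fin n) (Fin n) ℂ := (hA.eigenvectorUnitary : Matrix (Fin n) (Fin n) ℂ) with hVdef
  have hV : V * star V = 1 := Matrix.mem_unitaryGroup_iff.mp hA.eigenvectorUnitary.2
  set w : Fin n → ℂ := star V *ᵥ x with hw
  have hsw : star w = star x ᵥ* V := by
    rw [hw, star_mulVec, Matrix.star_eq_conjTranspose, conjTranspose_conjTranspose]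
  have hVw : V *ᵥ w = x := by
    rw [hw, mulVec_mulVec, hV, one_mulVec]
  refine ⟨w, ?_, ?_, ?_⟩
  · calc star x ⬝ᵥ A *ᵥ x
        = star x ⬝ᵥ ((V * diagonal (RCLike.ofReal ∘ hA.eigenvalues) * star V) *ᵥ x) := by
          conv_lhs => rw [hA.spectral_theorem]
          rfl
      _ = star w ⬝ᵥ (diagonal (RCLike.ofReal ∘ hA.eigenvalues) *ᵥ w) := by
          rw [← mulVec_mulVec, ← mulVec_mulVec, dotProduct_mulVec, hsw, hw]
      _ = ∑ i, (hA.eigenvalues i : ℂ) * ((‖w i‖^2 : ℝ) : ℂ) := by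
          simp only [dotProduct, mulVec_diagonal, Pi.star_apply, Function.comp_apply]
          refine Finset.sum_congr rfl fun i _ => ?_
          have h2 : star (w i) * w i = ((‖w i‖^2 : ℝ) : ℂ) := by
            rw [show star (w i) = (starRingEnd ℂ) (w i) from rfl, RCLike.conj_mul]
            norm_cast
          rw [mul_left_comm, h2,
            show (RCLike.ofReal (hA.eigenvalues i) : ℂ) = Complex.ofReal (hA.eigenvalues i)
              from rfl]
  · have h1 : star w ⬝ᵥ w = star x ⬝ᵥ x := by
      rw [hsw, hw, ← dotProduct_mulVec, mulVec_mulVec, hV, one_mulVec]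
    rw [dot_self_eq, dot_self_eq] at h1
    exact_mod_cast h1
  · intro ρ h
    have hD : diagonal (RCLike.ofReal ∘ hA.eigenvalues) *ᵥ w = (ρ : ℂ) • w := by
      ext i
      simp only [mulVec_diagonal, Function.comp_apply, Pi.smul_apply, smul_eq_mul]
      by_cases hi : hA.eigenvalues i = ρ
      · rw [hi]; rfl
      · rw [h i hi, mul_zero, mul_zero]
    calc A *ᵥ x = (V * diagonal (RCLike.ofReal ∘ hA.eigenvalues) * star V) *ᵥ x := by
          conv_lhs => rw [hA.spectral_theorem]
          rfl
      _ = V *ᵥ (diagonal (RCLike.ofReal ∘ hA.eigenvalues) *ᵥ w) := by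
          rw [← mulVec_mulVec, ← mulVec_mulVec]
      _ = (ρ : ℂ) • x := by rw [hD, mulVec_smul, hVw]

lemma re_eq_norm_imp {z : ℂ} (h : z.re = ‖z‖) : z = (‖z‖ : ℂ) := by
  have h2 : ‖z‖^2 = z.re^2 + z.im^2 := by
    rw [Complex.sq_norm, Complex.normSq_apply]; ring
  have him2 : z.im^2 = 0 := by rw [← h] at h2; linarith
  have him : z.im = 0 := by
    have := sq_nonneg z.im
    nlinarith
  apply Complex.ext
  · simp [← h]
  · simp [him]

/-- Perron–Frobenius equality case for PSD matrices: if `N` is Hermitian PSD,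
`M ≥ |N|` entrywise with `M` symmetric irreducible nonnegative, `M ≠ 0` and
`ρ(N) = ρ(M)`, then `N = U M U*` for some diagonal unitary `U`; in particular
`N` and `M` are cospectral. -/
theorem stmt_19 {n : ℕ} (hn : 2 ≤ n)
    (N : Matrix (Fin n) (Fin n) ℂ) (hN : N.IsHermitian)
    (M : Matrix (Fin n) (Fin n) ℝ) (hMnn : ∀ i j, 0 ≤ M i j)
    (hdom : ∀ i j, ‖N i j‖ ≤ M i j)
    (hirr : MatIrred M) (hMsymm : M.IsSymm) (hM0 : M ≠ 0)
    (hpsd : N.PosSemidef)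
    (hrad : specRad N = specRad (M.map Complex.ofReal)) :
    ∃ u : Fin n → ℂ, (∀ i, ‖u i‖ = 1) ∧
      N = Matrix.diagonal u * M.map Complex.ofReal * (Matrix.diagonal u)ᴴ ∧
      spectrum ℂ N = spectrum ℂ (M.map Complex.ofReal) := by
  have hpos : 0 < n := lt_of_lt_of_le two_pos hn
  set A : Matrix (Fin n) (Fin n) ℂ := M.map Complex.ofReal with hAdef
  have hA : A.IsHermitian := by
    ext i j
    simp only [conjTranspose_apply, hAdef, Matrix.map_apply]
    rw [show star ((M j i : ℝ) : ℂ) = ((M j i : ℝ) : ℂ) from Complex.conj_ofReal _]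
    exact_mod_cast congrFun (congrFun hMsymm i) j
  set ρ := specRad A with hρdef
  obtain ⟨⟨iA, hiA⟩, hboundA⟩ := specRad_herm hpos hA
  obtain ⟨⟨i0, hi0⟩, hboundN⟩ := specRad_herm hpos hN
  have hNev : ∀ i, 0 ≤ hN.eigenvalues i := hpsd.eigenvalues_nonneg
  have hρ0 : 0 ≤ ρ := by rw [← hrad, ← hi0]; exact abs_nonneg _
  have hev0 : hN.eigenvalues i0 = ρ := by
    rw [← abs_of_nonneg (hNev i0), hi0, hrad]
  set z : Fin n → ℂ := ⇑(hN.eigenvectorBasis i0) with hzdef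
  have hNz : N *ᵥ z = (ρ : ℂ) • z := by
    have h := hN.mulVec_eigenvectorBasis i0
    rw [hev0] at h
    rw [hzdef, h]
    funext i
    simp [Complex.real_smul]
  have hsum1 : (∑ i, ‖z i‖^2) = 1 := by
    have h := hN.eigenvectorBasis.orthonormal.1 i0
    rw [EuclideanSpace.norm_eq] at h
    have h2 := congrArg (fun r : ℝ => r^2) h
    simp only [one_pow] at h2
    rwa [Real.sq_sqrt (Finset.sum_nonneg fun i _ => sq_nonneg _)] at h2
  -- ρ > 0
  have hρpos : 0 < ρ := by
    rcases hρ0.lt_or_eq with h | h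
    · exact h
    · exfalso
      apply hM0
      have hev : ∀ i, hA.eigenvalues i = 0 := fun i =>
        abs_eq_zero.mp (le_antisymm (h ▸ hboundA i) (abs_nonneg _))
      have hA0 : A = 0 := by
        have h0 : (RCLike.ofReal ∘ hA.eigenvalues : Fin n → ℂ) = fun _ => 0 := by
          funext i; simp [hev i]
        rw [hA.spectral_theorem, h0]
        simp
      ext i j
      have := congrFun (congrFun hA0 i) j
      simp only [hAdef, Matrix.map_apply, Matrix.zero_apply] at this ⊢
      exact_mod_cast this
  -- quadratic form of N at z equals ρ
  have hz1 : star z ⬝ᵥ z = 1 := by rw [dot_self_eq, hsum1]; norm_num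
  have hc : star z ⬝ᵥ N *ᵥ z = (ρ : ℂ) := by
    rw [hNz, dotProduct_smul, hz1, smul_eq_mul, mul_one]
  set y : Fin n → ℝ := fun i => ‖z i‖ with hydef
  set yc : Fin n → ℂ := fun i => ((y i : ℝ) : ℂ) with hycdef
  have hynn : ∀ i, 0 ≤ y i := fun i => norm_nonneg _
  -- expand quadratic form of N as double sum
  have hexp : star z ⬝ᵥ N *ᵥ z = ∑ p : Fin n × Fin n, star (z p.1) * N p.1 p.2 * z p.2 := by
    rw [Fintype.sum_prod_type]
    simp only [dotProduct, mulVec, Pi.star_apply, Finset.mul_sum]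
    exact Finset.sum_congr rfl fun i _ => Finset.sum_congr rfl fun j _ => by ring
  -- Rayleigh computation for A at yc
  obtain ⟨w, hw1, hw2, hw3⟩ := herm_quad hA yc
  have hycnorm : ∀ i, ‖yc i‖ = y i := by
    intro i; simp [hycdef, Complex.norm_real, abs_of_nonneg (hynn i)]
  have hycsum : (∑ i, ‖yc i‖^2) = 1 := by
    calc (∑ i, ‖yc i‖^2) = ∑ i, ‖z i‖^2 := by
          refine Finset.sum_congr rfl fun i _ => ?_
          rw [hycnorm i, hydef]
      _ = 1 := hsum1
  have hS2c : star yc ⬝ᵥ A *ᵥ yc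
      = ((∑ p : Fin n × Fin n, M p.1 p.2 * (y p.1 * y p.2) : ℝ) : ℂ) := by
    rw [Fintype.sum_prod_type]
    simp only [dotProduct, mulVec, Pi.star_apply, Finset.mul_sum]
    push_cast
    refine Finset.sum_congr rfl fun i _ => Finset.sum_congr rfl fun j _ => ?_
    simp only [hycdef, hAdef, Matrix.map_apply, Complex.star_def, Complex.conj_ofReal]
    ring
  have hwsum : (∑ i, ‖w i‖^2) = 1 := hw2.trans hycsum
  -- S2 real value
  set S2 : ℝ := ∑ p : Fin n × Fin n, M p.1 p.2 * (y p.1 * y p.2) with hS2def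
  have hS2eig : S2 = ∑ i, hA.eigenvalues i * ‖w i‖^2 := by
    have := hS2c.symm.trans hw1
    have h2 : ((S2 : ℝ) : ℂ) = ((∑ i, hA.eigenvalues i * ‖w i‖^2 : ℝ) : ℂ) := by
      rw [this]; push_cast; ring_nf
    exact_mod_cast h2
  have hS2le : S2 ≤ ρ := by
    rw [hS2eig]
    calc (∑ i, hA.eigenvalues i * ‖w i‖^2)
        ≤ ∑ i, ρ * ‖w i‖^2 := by
          refine Finset.sum_le_sum fun i _ => ?_
          exact mul_le_mul_of_nonneg_right
            ((le_abs_self _).trans (hboundA i)) (sq_nonneg _)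
      _ = ρ := by rw [← Finset.mul_sum, hwsum, mul_one]
  -- triangle chain
  set t : Fin n × Fin n → ℂ := fun p => star (z p.1) * N p.1 p.2 * z p.2 with htdef
  have htnorm : ∀ p : Fin n × Fin n, ‖t p‖ = ‖N p.1 p.2‖ * (y p.1 * y p.2) := by
    intro p
    simp only [htdef, norm_mul, norm_star, hydef]
    ring
  have hre : (∑ p : Fin n × Fin n, (t p).re) = ρ := by
    have h3 : (star z ⬝ᵥ N *ᵥ z).re = ρ := by rw [hc]; exact Complex.ofReal_re ρ
    rw [hexp, Complex.re_sum] at h3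
    exact h3
  have hreLn : ∀ p : Fin n × Fin n, (t p).re ≤ ‖t p‖ := fun p => Complex.re_le_norm _
  have hnormLe : ∀ p : Fin n × Fin n, ‖t p‖ ≤ M p.1 p.2 * (y p.1 * y p.2) := by
    intro p
    rw [htnorm p]
    exact mul_le_mul_of_nonneg_right (hdom _ _) (mul_nonneg (hynn _) (hynn _))
  have hchain1 : (∑ p : Fin n × Fin n, ‖t p‖) ≤ S2 := Finset.sum_le_sum fun p _ => hnormLe p
  have hchain0 : ρ ≤ ∑ p : Fin n × Fin n, ‖t p‖ := by
    rw [← hre]; exact Finset.sum_le_sum fun p _ => hreLn p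
  have hsumnorm : (∑ p : Fin n × Fin n, ‖t p‖) = ρ :=
    le_antisymm (hchain1.trans hS2le) hchain0
  have hS2eq : S2 = ρ := le_antisymm hS2le (hsumnorm ▸ hchain1)
  -- termwise equalities
  have hre_eq : ∀ p ∈ Finset.univ, (t p).re = ‖t p‖ :=
    (Finset.sum_eq_sum_iff_of_le fun p _ => hreLn p).mp (hre.trans hsumnorm.symm)
  have hnorm_eq : ∀ p ∈ Finset.univ, ‖t p‖ = M p.1 p.2 * (y p.1 * y p.2) :=
    (Finset.sum_eq_sum_iff_of_le fun p _ => hnormLe p).mp (hsumnorm.trans hS2eq.symm)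
  have ht_eq : ∀ i j, star (z i) * N i j * z j = ((M i j * (y i * y j) : ℝ) : ℂ) := by
    intro i j
    have h1 := re_eq_norm_imp (hre_eq (i, j) (Finset.mem_univ _))
    have h2 := hnorm_eq (i, j) (Finset.mem_univ _)
    rw [h2] at h1
    exact h1
  -- eigen equation for y: A yc = ρ yc
  have hweig : ∀ i, hA.eigenvalues i ≠ ρ → w i = 0 := by
    intro i hi
    have hkey : (∑ i, (ρ - hA.eigenvalues i) * ‖w i‖^2) = 0 := by
      have : (∑ i, (ρ - hA.eigenvalues i) * ‖w i‖^2)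
          = ρ * (∑ i, ‖w i‖^2) - ∑ i, hA.eigenvalues i * ‖w i‖^2 := by
        rw [Finset.mul_sum, ← Finset.sum_sub_distrib]
        exact Finset.sum_congr rfl fun i _ => by ring
      rw [this, hwsum, mul_one, ← hS2eig, hS2eq, sub_self]
    have hterm : ∀ j ∈ Finset.univ, (0:ℝ) ≤ (ρ - hA.eigenvalues j) * ‖w j‖^2 := by
      intro j _
      exact mul_nonneg (sub_nonneg.mpr ((le_abs_self _).trans (hboundA j))) (sq_nonneg _)
    have := (Finset.sum_eq_zero_iff_of_nonneg hterm).mp hkey i (Finset.mem_univ _)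
    rcases mul_eq_zero.mp this with h | h
    · exact absurd (by linarith [sub_eq_zero.mp h] : hA.eigenvalues i = ρ) hi
    · exact norm_eq_zero.mp (pow_eq_zero_iff (by norm_num) |>.mp h)
  have hAy : A *ᵥ yc = (ρ : ℂ) • yc := hw3 ρ hweig
  have hMy : ∀ i, (∑ j, M i j * y j) = ρ * y i := by
    intro i
    have := congrFun hAy i
    simp only [mulVec, dotProduct, Pi.smul_apply, smul_eq_mul, hAdef, Matrix.map_apply,
      hycdef] at this
    exact_mod_cast this
  -- positivity of y
  have hypos : ∀ i, 0 < y i := by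
    by_contra hcon
    push_neg at hcon
    obtain ⟨i1, hi1⟩ := hcon
    have hi1' : y i1 = 0 := le_antisymm hi1 (hynn i1)
    set S : Set (Fin n) := {i | y i = 0} with hSdef
    have hS1 : S.Nonempty := ⟨i1, hi1'⟩
    have hS2' : Sᶜ.Nonempty := by
      by_contra hc
      rw [Set.not_nonempty_iff_eq_empty, ← Set.compl_univ, compl_inj_iff] at hc
      have : (∑ i, ‖z i‖^2) = 0 := by
        refine Finset.sum_eq_zero fun i _ => ?_
        have hyi : i ∈ S := by rw [hc]; trivial
        have hzi : ‖z i‖ = 0 := hyi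
        simp [hzi]
      rw [hsum1] at this
      norm_num at this
    obtain ⟨i2, hi2, j2, hj2, hMij⟩ := hirr S hS1 hS2'
    have hyi2 : y i2 = 0 := hi2
    have hyj2 : 0 < y j2 := lt_of_le_of_ne (hynn j2) (Ne.symm hj2)
    have hzero : (∑ j, M i2 j * y j) = 0 := by rw [hMy i2, hyi2, mul_zero]
    have hterm : ∀ j ∈ Finset.univ, (0:ℝ) ≤ M i2 j * y j :=
      fun j _ => mul_nonneg (hMnn _ _) (hynn _)
    have := (Finset.sum_eq_zero_iff_of_nonneg hterm).mp hzero j2 (Finset.mem_univ _)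
    rcases mul_eq_zero.mp this with h | h
    · exact hMij h
    · exact absurd h (ne_of_gt hyj2)
  -- define u
  set u : Fin n → ℂ := fun i => z i / ((y i : ℝ) : ℂ) with hudef
  have hycne : ∀ i, ((y i : ℝ) : ℂ) ≠ 0 := by
    intro i
    exact_mod_cast (ne_of_gt (hypos i))
  have hynorm : ∀ i, ‖((y i : ℝ) : ℂ)‖ = y i := by
    intro i
    rw [Complex.norm_real, Real.norm_eq_abs]
    exact abs_of_nonneg (hynn i)
  have hu : ∀ i, ‖u i‖ = 1 := by
    intro i
    rw [hudef]
    show ‖z i / ((y i : ℝ) : ℂ)‖ = 1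
    rw [norm_div, hynorm i, show ‖z i‖ = y i from rfl]
    exact div_self (ne_of_gt (hypos i))
  have hzu : ∀ i, z i = u i * ((y i : ℝ) : ℂ) := by
    intro i
    rw [hudef]
    exact (div_mul_cancel₀ _ (hycne i)).symm
  have huu : ∀ i, u i * star (u i) = 1 := by
    intro i
    rw [show star (u i) = (starRingEnd ℂ) (u i) from rfl, Complex.mul_conj']
    rw [hu i]
    norm_num
  have hNij : ∀ i j, N i j = u i * ((M i j : ℝ) : ℂ) * star (u j) := by
    intro i j
    have h1 := ht_eq i j
    rw [hzu i, hzu j] at h1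
    have h2 : ((y i : ℝ) : ℂ) * ((y j : ℝ) : ℂ) * (star (u i) * N i j * u j)
        = ((y i : ℝ) : ℂ) * ((y j : ℝ) : ℂ) * ((M i j : ℝ) : ℂ) := by
      have hst : star (u i * ((y i : ℝ) : ℂ)) = star (u i) * ((y i : ℝ) : ℂ) := by
        rw [star_mul']
        congr 1
        exact Complex.conj_ofReal _
      rw [hst] at h1
      push_cast at h1 ⊢
      linear_combination h1
    have h3 : star (u i) * N i j * u j = ((M i j : ℝ) : ℂ) :=
      mul_left_cancel₀ (mul_ne_zero (hycne i) (hycne j)) (by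
        rw [← mul_assoc] at h2 ⊢
        exact h2)
    calc N i j = (u i * star (u i)) * N i j * (u j * star (u j)) := by
          rw [huu i, huu j, one_mul, mul_one]
      _ = u i * (star (u i) * N i j * u j) * star (u j) := by ring
      _ = u i * ((M i j : ℝ) : ℂ) * star (u j) := by rw [h3]
  have hmat : N = Matrix.diagonal u * A * (Matrix.diagonal u)ᴴ := by
    ext i j
    rw [Matrix.diagonal_conjTranspose, Matrix.mul_diagonal, Matrix.diagonal_mul, hNij i j]
    rfl
  have huu' : ∀ i, star (u i) * u i = 1 := fun i => by rw [mul_comm]; exact huu i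
  have hd1 : Matrix.diagonal u * Matrix.diagonal (star u) = 1 := by
    ext i j
    by_cases hij : i = j
    · subst hij
      simp [Matrix.mul_apply, Matrix.diagonal_apply]
      exact huu i
    · simp [Matrix.mul_apply, Matrix.diagonal_apply, Matrix.one_apply, hij]
  have hd2 : Matrix.diagonal (star u) * Matrix.diagonal u = 1 := by
    ext i j
    by_cases hij : i = j
    · subst hij
      simp [Matrix.mul_apply, Matrix.diagonal_apply]
      exact huu' i
    · simp [Matrix.mul_apply, Matrix.diagonal_apply, Matrix.one_apply, hij]
  refine ⟨u, hu, hmat, ?_⟩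
  set U : (Matrix (Fin n) (Fin n) ℂ)ˣ := ⟨Matrix.diagonal u, Matrix.diagonal (star u), hd1, hd2⟩
    with hUdef
  have hspec : spectrum ℂ ((U : Matrix (Fin n) (Fin n) ℂ) * A
      * ((U⁻¹ : (Matrix (Fin n) (Fin n) ℂ)ˣ) : Matrix (Fin n) (Fin n) ℂ)) = spectrum ℂ A :=
    spectrum.units_conjugate
  rw [hmat, Matrix.diagonal_conjTranspose]
  exact hspec
end
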